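/- arXiv:1711.02056 — 5 statements merged into one kernel-verified Lean document; each statement's English description precedes it below -/
import Mathlib

section
/- In the single-transmission ($M=1$) Rayleigh fading model, the outage probability equals $1 - f(\mu, \lambda/B, \Gamma)$ where $f(\mu, \alpha, \Gamma) = e^{-\mu\Gamma/\rho}(\Gamma+1)\frac{e^{\alpha/(\Gamma+1)} - 1}{e^{\alpha} - 1}$. That is, if $h \sim \mathrm{Exp}(\mu)$, $K$ is zero-truncated Poisson with parameter $\alpha = \lambda/B$, the interference given $K = k$ is $I_k = \rho\sum_{i=1}^{k-1} g_i$ with $g_i$ i.i.d. $\mathrm{Exp}(\mu)$ independent of $h$ and $K$, then $\mathbb{P}\left[\frac{\rho h}{1 + I_K} < \Gamma\right] = 1 - e^{-\mu\Gamma/\rho}(\Gamma+1)\frac{e^{\alpha/(\Gamma+1)} - 1}{e^{\alpha} - 1}$. -/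
open MeasureTheory ProbabilityTheory Real
open Set
open scoped ENNReal

lemma expMeasure_def (r : ℝ) : expMeasure r = volume.withDensity (exponentialPDF r) := rfl

lemma expMeasure_Iio_zero (r : ℝ) : expMeasure r (Set.Iio 0) = 0 := by
  rw [expMeasure_def, withDensity_apply _ measurableSet_Iio]
  exact lintegral_exponentialPDF_of_nonpos le_rfl

lemma expMeasure_singleton (r a : ℝ) : expMeasure r {a} = 0 := by
  rw [expMeasure_def, withDensity_apply _ (measurableSet_singleton a)]
  simp

lemma expMeasure_Ici {r a : ℝ} (hr : 0 < r) (ha : 0 ≤ a) :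
    expMeasure r (Set.Ici a) = ENNReal.ofReal (Real.exp (-(r*a))) := by
  haveI := isProbabilityMeasure_expMeasure hr
  have h1 : expMeasure r (Set.Ici a) = expMeasure r (Set.Ioi a) := by
    refine le_antisymm ?_ (measure_mono Set.Ioi_subset_Ici_self)
    calc expMeasure r (Set.Ici a) = expMeasure r ({a} ∪ Set.Ioi a) := by
          rw [Set.singleton_union, Set.Ioi_insert]
      _ ≤ expMeasure r {a} + expMeasure r (Set.Ioi a) := measure_union_le _ _
      _ = expMeasure r (Set.Ioi a) := by rw [expMeasure_singleton, zero_add]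
  have hle : Real.exp (-(r*a)) ≤ 1 := by
    exact Real.exp_le_one_iff.2 (neg_nonpos.2 (by positivity))
  rw [h1, ← Set.compl_Iic, measure_compl measurableSet_Iic (measure_ne_top _ _),
    measure_univ, ← ofReal_cdf, cdf_expMeasure_eq hr, if_pos ha,
    (show (1:ℝ≥0∞) = ENNReal.ofReal 1 by simp), ← ENNReal.ofReal_sub _ (by linarith [Real.exp_pos (-(r*a))])]
  norm_num



lemma measurable_exponentialPDF (r : ℝ) : Measurable (exponentialPDF r) :=
  (measurable_exponentialPDFReal r).ennreal_ofReal

lemma lintegral_exp_neg_expMeasure {r s : ℝ} (hr : 0 < r) (hs : 0 ≤ s) :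
    ∫⁻ x, ENNReal.ofReal (Real.exp (-(s*x))) ∂(expMeasure r) = ENNReal.ofReal (r/(r+s)) := by
  rw [expMeasure_def, lintegral_withDensity_eq_lintegral_mul _ (measurable_exponentialPDF r)
    (show Measurable (fun x : ℝ => ENNReal.ofReal (rexp (-(s*x)))) from
      (measurable_id'.const_mul s).neg.exp.ennreal_ofReal)]
  have key : ∀ x : ℝ, (exponentialPDF r * fun x => ENNReal.ofReal (rexp (-(s*x)))) x
      = ENNReal.ofReal (r/(r+s)) * exponentialPDF (r+s) x := by
    intro x
    rcases le_or_gt 0 x with hx | hx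
    · rw [Pi.mul_apply, exponentialPDF_of_nonneg hx, exponentialPDF_of_nonneg hx,
        ← ENNReal.ofReal_mul (by positivity), ← ENNReal.ofReal_mul (by positivity)]
      congr 1
      have hrs : r + s > 0 := by linarith
      rw [mul_assoc, ← Real.exp_add, show -(r*x) + -(s*x) = -((r+s)*x) by ring]
      field_simp
    · rw [Pi.mul_apply, exponentialPDF_of_neg hx, exponentialPDF_of_neg hx, zero_mul, mul_zero]
  rw [lintegral_congr key, lintegral_const_mul _ (measurable_exponentialPDF _),
    lintegral_exponentialPDF_eq_one (by linarith), mul_one]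


lemma mgf_sum {Ω : Type*} [MeasureSpace Ω] (P : Measure Ω) [IsProbabilityMeasure P]
    (g : ℕ → Ω → ℝ) (hmg : ∀ i, Measurable (g i)) (μ s : ℝ) (hμ : 0 < μ) (hs : 0 ≤ s)
    (hdistg : ∀ i, Measure.map (g i) P = expMeasure μ)
    (hind : ∀ n, IndepFun (fun ω => ∑ i ∈ Finset.range n, g i ω) (g n) P) (n : ℕ) :
    ∫⁻ ω, ENNReal.ofReal (rexp (-(s * ∑ i ∈ Finset.range n, g i ω))) ∂P
      = ENNReal.ofReal ((μ/(μ+s))^n) := by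
  induction n with
  | zero => simp
  | succ n ih =>
    have hφ : Measurable (fun x : ℝ => ENNReal.ofReal (rexp (-(s*x)))) :=
      (measurable_id'.const_mul s).neg.exp.ennreal_ofReal
    have hmS : Measurable (fun ω => ∑ i ∈ Finset.range n, g i ω) := by
      exact Finset.measurable_sum _ (fun i _ => hmg i)
    have heq : ∀ ω, ENNReal.ofReal (rexp (-(s * ∑ i ∈ Finset.range (n+1), g i ω)))
        = ENNReal.ofReal (rexp (-(s * ∑ i ∈ Finset.range n, g i ω)))
          * ENNReal.ofReal (rexp (-(s * g n ω))) := by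
      intro ω
      rw [← ENNReal.ofReal_mul (by positivity), ← Real.exp_add, Finset.sum_range_succ]
      ring_nf
    rw [lintegral_congr heq]
    have hIndep2 : IndepFun (fun ω => ENNReal.ofReal (rexp (-(s * ∑ i ∈ Finset.range n, g i ω))))
        (fun ω => ENNReal.ofReal (rexp (-(s * g n ω)))) P := (hind n).comp hφ hφ
    have hm1 : AEMeasurable (fun ω => ENNReal.ofReal (rexp (-(s * ∑ i ∈ Finset.range n, g i ω)))) P :=
      (hφ.comp hmS).aemeasurable
    have hm2 : AEMeasurable (fun ω => ENNReal.ofReal (rexp (-(s * g n ω)))) P :=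
      (hφ.comp (hmg n)).aemeasurable
    rw [lintegral_mul_eq_lintegral_mul_lintegral_of_indepFun'' hm1 hm2 hIndep2, ih]
    have hlast : ∫⁻ ω, ENNReal.ofReal (rexp (-(s * g n ω))) ∂P = ENNReal.ofReal (μ/(μ+s)) := by
      rw [← lintegral_exp_neg_expMeasure hμ hs, ← hdistg n, lintegral_map hφ (hmg n)]
    rw [hlast, ← ENNReal.ofReal_mul (by positivity), pow_succ]


lemma key_prob {Ω : Type*} [MeasureSpace Ω] (P : Measure Ω) [IsProbabilityMeasure P]
    (h : Ω → ℝ) (g : ℕ → Ω → ℝ)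
    (hmh : Measurable h) (hmg : ∀ i, Measurable (g i))
    (μ ρ Γ : ℝ) (hμ : 0 < μ) (hρ : 0 < ρ) (hΓ : 0 < Γ)
    (hdisth : Measure.map h P = expMeasure μ)
    (hdistg : ∀ i, Measure.map (g i) P = expMeasure μ)
    (hindep : iIndepFun
        (fun n => (Nat.casesOn n h g : Ω → ℝ)) P) (n : ℕ) :
    P {ω | ρ * h ω / (1 + ρ * ∑ i ∈ Finset.range n, g i ω) < Γ}
      = 1 - ENNReal.ofReal (rexp (-(μ*Γ/ρ)) * (1/(Γ+1))^n) := by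
  set X : ℕ → Ω → ℝ := fun n => (Nat.casesOn n h g : Ω → ℝ) with hX
  have hmX : ∀ i, Measurable (X i) := by
    intro i; cases i with
    | zero => exact hmh
    | succ i => exact hmg i
  -- sums of g's expressed through X
  have hsum : ∀ m : ℕ, (∑ j ∈ (Finset.range m).image Nat.succ, X j)
      = fun ω => ∑ i ∈ Finset.range m, g i ω := by
    intro m
    funext ω
    rw [Finset.sum_apply, Finset.sum_image (fun a _ b _ hab => Nat.succ_injective hab)]
  -- independence of partial sums of g from g n
  have hindg : ∀ m, IndepFun (fun ω => ∑ i ∈ Finset.range m, g i ω) (g m) P := by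
    intro m
    have hnm : (m+1) ∉ (Finset.range m).image Nat.succ := by
      simp only [Finset.mem_image, Finset.mem_range]
      rintro ⟨a, ha, hab⟩
      omega
    have := hindep.indepFun_finsetSum_of_notMem hmX hnm
    rwa [hsum m] at this
  -- independence of the partial sum from h
  set S : Ω → ℝ := fun ω => ∑ i ∈ Finset.range n, g i ω with hS
  have hmS : Measurable S := Finset.measurable_sum _ (fun i _ => hmg i)
  have hSh : IndepFun S h P := by
    have hnm : (0:ℕ) ∉ (Finset.range n).image Nat.succ := by
      simp
    have := hindep.indepFun_finsetSum_of_notMem hmX hnm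
    rwa [hsum n] at this
  -- g's are a.e. nonneg
  have hg0 : ∀ᵐ ω ∂P, ∀ i, 0 ≤ g i ω := by
    rw [ae_all_iff]
    intro i
    have : P (g i ⁻¹' Set.Iio 0) = 0 := by
      rw [← Measure.map_apply (hmg i) measurableSet_Iio, hdistg i, expMeasure_Iio_zero]
    rw [ae_iff]
    simpa [Set.preimage, not_le] using this
  have hS0 : ∀ᵐ ω ∂P, 0 ≤ S ω := by
    filter_upwards [hg0] with ω hω
    exact Finset.sum_nonneg fun i _ => hω i
  -- event B and its complement
  set B : Set Ω := {ω | Γ/ρ * (1 + ρ * S ω) ≤ h ω} with hB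
  have hmB : MeasurableSet B :=
    measurableSet_le (((hmS.const_mul ρ).const_add 1).const_mul (Γ/ρ)) hmh
  have hcongr : {ω | ρ * h ω / (1 + ρ * S ω) < Γ} =ᵐ[P] Bᶜ := by
    filter_upwards [hS0] with ω hω
    have hpos : 0 < 1 + ρ * S ω := by positivity
    change (ρ * h ω / (1 + ρ * S ω) < Γ) = ¬ (Γ/ρ * (1 + ρ * S ω) ≤ h ω)
    simp only [eq_iff_iff, not_le]
    rw [div_lt_iff₀ hpos]
    constructor
    · intro hlt
      rw [div_mul_eq_mul_div, lt_div_iff₀ hρ]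
      nlinarith
    · intro hlt
      rw [div_mul_eq_mul_div, lt_div_iff₀ hρ] at hlt
      nlinarith
  rw [measure_congr (show ({ω | ρ * h ω / (1 + ρ * S ω) < Γ} : Set Ω) =ᵐ[P] (Bᶜ : Set Ω) from hcongr), measure_compl hmB (measure_ne_top _ _), measure_univ]
  -- compute P B via the product measure
  congr 1
  have hmap : Measure.map (fun ω => (S ω, h ω)) P = (Measure.map S P).prod (expMeasure μ) := by
    rw [← hdisth]
    exact (indepFun_iff_map_prod_eq_prod_map_map hmS.aemeasurable hmh.aemeasurable).1 hSh
  have hmT : MeasurableSet {p : ℝ × ℝ | Γ/ρ * (1 + ρ * p.1) ≤ p.2} :=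
    measurableSet_le (((measurable_fst.const_mul ρ).const_add 1).const_mul (Γ/ρ)) measurable_snd
  have hBpre : B = (fun ω => (S ω, h ω)) ⁻¹' {p : ℝ × ℝ | Γ/ρ * (1 + ρ * p.1) ≤ p.2} := rfl
  haveI := isProbabilityMeasure_expMeasure hμ
  rw [hBpre, ← Measure.map_apply (hmS.prodMk hmh) hmT, hmap,
    Measure.prod_apply hmT]
  have hae : ∀ᵐ y ∂(Measure.map S P), 0 ≤ y := by
    have hset : {y : ℝ | ¬ 0 ≤ y} = Set.Iio 0 := by ext y; simp [not_le]
    rw [ae_iff, hset, Measure.map_apply hmS measurableSet_Iio]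
    have h2 := ae_iff.1 hS0
    have hset2 : S ⁻¹' Set.Iio 0 = {ω | ¬ 0 ≤ S ω} := by ext ω; simp [not_le]
    rw [hset2]
    exact h2
  have hcongr2 : ∫⁻ y, expMeasure μ (Prod.mk y ⁻¹' {p : ℝ × ℝ | Γ/ρ * (1 + ρ * p.1) ≤ p.2})
        ∂(Measure.map S P)
      = ∫⁻ y, ENNReal.ofReal (rexp (-(μ*Γ/ρ))) * ENNReal.ofReal (rexp (-(μ*Γ*y)))
        ∂(Measure.map S P) := by
    refine lintegral_congr_ae ?_
    filter_upwards [hae] with y hy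
    have hpre : Prod.mk y ⁻¹' {p : ℝ × ℝ | Γ/ρ * (1 + ρ * p.1) ≤ p.2}
        = Set.Ici (Γ/ρ * (1 + ρ * y)) := rfl
    have harg : 0 ≤ Γ/ρ * (1 + ρ * y) := by positivity
    rw [hpre, expMeasure_Ici hμ harg, ← ENNReal.ofReal_mul (by positivity), ← Real.exp_add]
    congr 2
    field_simp
    ring
  rw [hcongr2, lintegral_const_mul _ (show Measurable (fun y : ℝ => ENNReal.ofReal (rexp (-(μ*Γ*y)))) from (measurable_id'.const_mul (μ*Γ)).neg.exp.ennreal_ofReal)]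
  have hlint : ∫⁻ y, ENNReal.ofReal (rexp (-(μ*Γ*y))) ∂(Measure.map S P)
      = ENNReal.ofReal ((1/(Γ+1))^n) := by
    rw [lintegral_map (show Measurable (fun y : ℝ => ENNReal.ofReal (rexp (-(μ*Γ*y)))) from (measurable_id'.const_mul (μ*Γ)).neg.exp.ennreal_ofReal) hmS]
    have := mgf_sum P g hmg μ (μ*Γ) hμ (by positivity) hdistg hindg n
    simp only [hS]
    rw [this]
    congr 1
    congr 1
    rw [div_eq_div_iff (by positivity) (by positivity)]
    ring
  rw [hlint, ← ENNReal.ofReal_mul (by positivity)]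


/-- Single-transmission (`M = 1`) outage probability under Rayleigh fading. The desired user's
channel power `h` is exponential with rate `μ`; the number `K` of contenders in the bin is
zero-truncated Poisson with parameter `α = λ/B`; the interferers' channel powers `g i` are
i.i.d. exponential with rate `μ`; all of these are mutually independent. Treating interference
as noise, the outage probability is
`P[ρh/(1 + ρ∑_{i<K-1} g i) < Γ] = 1 - e^(-μΓ/ρ)(Γ+1)(e^(α/(Γ+1)) - 1)/(e^α - 1)`. -/
theorem rayleigh_outage_M1 {Ω : Type*} [MeasureSpace Ω]
    (P : Measure Ω) [IsProbabilityMeasure P]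
    (h : Ω → ℝ) (g : ℕ → Ω → ℝ) (K : Ω → ℕ)
    (hmh : Measurable h) (hmg : ∀ i, Measurable (g i)) (hmK : Measurable K)
    (μ ρ Γ α : ℝ) (hμ : 0 < μ) (hρ : 0 < ρ) (hΓ : 0 < Γ) (hα : 0 < α)
    (hdisth : Measure.map h P = ProbabilityTheory.expMeasure μ)
    (hdistg : ∀ i, Measure.map (g i) P = ProbabilityTheory.expMeasure μ)
    (hKpos : ∀ ω, 1 ≤ K ω)
    (hdistK : ∀ k : ℕ, 1 ≤ k →
      (P {ω | K ω = k}).toReal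
        = α ^ k * Real.exp (-α) / (k.factorial * (1 - Real.exp (-α))))
    (hindep : iIndepFun
        (fun n => (Nat.casesOn n h g : Ω → ℝ)) P)
    (hindepK : IndepFun K (fun ω => fun n => (Nat.casesOn n h g : Ω → ℝ) ω) P) :
    (P {ω | ρ * h ω / (1 + ρ * ∑ i ∈ Finset.range (K ω - 1), g i ω) < Γ}).toReal
      = 1 - Real.exp (-μ * Γ / ρ) * (Γ + 1)
          * (Real.exp (α / (Γ + 1)) - 1) / (Real.exp α - 1) := by
  -- notation
  set c : ℝ := rexp (-(μ*Γ/ρ)) with hc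
  set q : ℝ := 1/(Γ+1) with hq
  have hq0 : 0 < q := by positivity
  have hq1 : q ≤ 1 := by
    rw [hq, div_le_one (by linarith)]; linarith
  have hc1 : c ≤ 1 := by
    rw [hc, Real.exp_le_one_iff]
    exact neg_nonpos.2 (by positivity)
  -- the events
  set C : ℕ → Set Ω := fun k =>
    K ⁻¹' {k} ∩ {ω | ρ * h ω / (1 + ρ * ∑ i ∈ Finset.range (k-1), g i ω) < Γ} with hC
  have hmC : ∀ k, MeasurableSet (C k) := by
    intro k
    refine (hmK (measurableSet_singleton k)).inter ?_
    exact measurableSet_lt ((hmh.const_mul ρ).div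
      (((Finset.measurable_sum _ (fun i _ => hmg i)).const_mul ρ).const_add 1)) measurable_const
  have hdisj : Pairwise (Function.onFun Disjoint C) := by
    intro a b hab
    refine Set.disjoint_left.2 ?_
    rintro ω ⟨ha, -⟩ ⟨hb, -⟩
    exact hab (ha.symm.trans hb)
  have hsU : {ω | ρ * h ω / (1 + ρ * ∑ i ∈ Finset.range (K ω - 1), g i ω) < Γ} = ⋃ k, C k := by
    ext ω
    simp only [Set.mem_iUnion, hC, Set.mem_inter_iff, Set.mem_preimage, Set.mem_singleton_iff,
      Set.mem_setOf_eq]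
    constructor
    · intro hlt; exact ⟨K ω, rfl, hlt⟩
    · rintro ⟨k, rfl, hlt⟩; exact hlt
  rw [hsU, measure_iUnion hdisj hmC, ENNReal.tsum_toReal_eq (fun k => measure_ne_top _ _)]
  -- value of each term
  have hCval : ∀ k : ℕ, 1 ≤ k → (P (C k)).toReal
      = (α ^ k * rexp (-α) / (k.factorial * (1 - rexp (-α)))) * (1 - c * q^(k-1)) := by
    intro k hk
    have hmT : MeasurableSet {f : ℕ → ℝ |
        ρ * f 0 / (1 + ρ * ∑ i ∈ Finset.range (k-1), f (i+1)) < Γ} := by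
      exact measurableSet_lt (by fun_prop)
        measurable_const
    have hpre : {ω | ρ * h ω / (1 + ρ * ∑ i ∈ Finset.range (k-1), g i ω) < Γ}
        = (fun ω => fun n => (Nat.casesOn n h g : Ω → ℝ) ω) ⁻¹' {f : ℕ → ℝ |
          ρ * f 0 / (1 + ρ * ∑ i ∈ Finset.range (k-1), f (i+1)) < Γ} := rfl
    have hsplit := hindepK.measure_inter_preimage_eq_mul _ _ (measurableSet_singleton k) hmT
    rw [hC]
    simp only []
    rw [hpre, hsplit, ENNReal.toReal_mul]
    have hkey := key_prob P h g hmh hmg μ ρ Γ hμ hρ hΓ hdisth hdistg hindep (k-1)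
    rw [← hpre, hkey]
    have hx0 : 0 ≤ c * q^(k-1) := by positivity
    have hx1 : c * q^(k-1) ≤ 1 := by
      calc c * q^(k-1) ≤ 1 * 1 := by
            exact mul_le_mul hc1 (pow_le_one₀ hq0.le hq1) (by positivity) zero_le_one
        _ = 1 := mul_one 1
    have htr : (1 - ENNReal.ofReal (c * q^(k-1))).toReal = 1 - c * q^(k-1) := by
      rw [ENNReal.toReal_sub_of_le (ENNReal.ofReal_le_one.2 hx1) ENNReal.one_ne_top,
        ENNReal.toReal_one, ENNReal.toReal_ofReal hx0]
    rw [htr]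
    congr 1
    have : K ⁻¹' {k} = {ω | K ω = k} := rfl
    rw [this, hdistK k hk]
  -- series setup
  set t : ℕ → ℝ := fun k => (P (C k)).toReal with ht
  have ht0 : t 0 = 0 := by
    have : C 0 = ∅ := by
      rw [hC]
      ext ω
      simp only [Set.mem_inter_iff, Set.mem_preimage, Set.mem_singleton_iff,
        Set.mem_empty_iff_false, iff_false, not_and]
      intro h0
      exact absurd h0 (by have := hKpos ω; omega)
    simp [ht, this]
  have hsummable : Summable t := by
    refine ENNReal.summable_toReal ?_
    rw [← measure_iUnion hdisj hmC]
    exact measure_ne_top _ _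
  rw [show ∑' k, t k = ∑' k, t k from rfl, hsummable.tsum_eq_zero_add, ht0, zero_add]
  -- rewrite terms
  have hEpos : (0:ℝ) < 1 - rexp (-α) := by
    have : rexp (-α) < 1 := by
      rw [Real.exp_lt_one_iff]; linarith
    linarith
  set E : ℝ := rexp (-α) / (1 - rexp (-α)) with hE
  set β : ℝ := α * q with hβ
  have hterm : ∀ j : ℕ, t (j+1)
      = E * (α^(j+1) / (j+1).factorial) - c * E * (Γ+1) * (β^(j+1) / (j+1).factorial) := by
    intro j
    rw [ht]
    simp only []
    rw [hCval (j+1) (by omega)]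
    have hstep : (j+1) - 1 = j := rfl
    rw [hstep]
    have hqpow : α^(j+1) * q^j = β^(j+1) * (Γ+1) := by
      rw [hβ, mul_pow, pow_succ q, hq]
      field_simp
    have hfact : (0:ℝ) < ((j+1).factorial : ℝ) := Nat.cast_pos.2 (Nat.factorial_pos _)
    have expand : α^(j+1)*rexp (-α)/(((j+1).factorial : ℝ)*(1-rexp (-α))) * (1 - c*q^j)
        = E*(α^(j+1)/((j+1).factorial : ℝ)) - c*E*((α^(j+1)*q^j)/((j+1).factorial : ℝ)) := by
      rw [hE]
      field_simp
    rw [expand, hqpow]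
    ring
  rw [tsum_congr hterm]
  have hsumA : Summable (fun j : ℕ => α^(j+1) / (((j+1).factorial : ℝ))) :=
    (Real.summable_pow_div_factorial α).comp_injective Nat.succ_injective
  have hsumB : Summable (fun j : ℕ => β^(j+1) / (((j+1).factorial : ℝ))) :=
    (Real.summable_pow_div_factorial β).comp_injective Nat.succ_injective
  rw [Summable.tsum_sub (hsumA.mul_left E) (hsumB.mul_left (c*E*(Γ+1))), tsum_mul_left, tsum_mul_left]
  have hseries : ∀ x : ℝ, ∑' j : ℕ, x^(j+1) / (((j+1).factorial : ℝ)) = rexp x - 1 := by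
    intro x
    have hexp : rexp x = ∑' n : ℕ, x^n / ((n.factorial : ℝ)) := by
      rw [Real.exp_eq_exp_ℝ, NormedSpace.exp_eq_tsum_div]
    rw [(Real.summable_pow_div_factorial x).tsum_eq_zero_add] at hexp
    simp only [pow_zero, Nat.factorial_zero, Nat.cast_one, div_one] at hexp
    linarith
  rw [hseries, hseries]
  have hXpos : (0:ℝ) < rexp α - 1 := by
    have := Real.exp_lt_exp.2 hα
    rw [Real.exp_zero] at this
    linarith
  have hβeq : α / (Γ+1) = β := by rw [hβ, hq]; ring
  have hceq : rexp (-μ * Γ / ρ) = c := by rw [hc]; ring_nf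
  rw [hβeq, hceq]
  have hEeq : E = 1 / (rexp α - 1) := by
    rw [hE, Real.exp_neg, div_eq_div_iff (by rw [← Real.exp_neg]; exact hEpos.ne') hXpos.ne']
    field_simp
  rw [hEeq]
  field_simp
end

section
/- Define $f(n, L, x) = \frac{n\log_2(1+x) + 0.5\log_2 n - L}{\sqrt{n V(x)}}$ where $V(x) = \left[1 - \frac{1}{(1+x)^2}\right]\log_2^2 e$. Assume $n \geq 1$ and $0.5\log_2 n \leq L$ (i.e., $n \leq 2^{2L}$). Then $f(n, L, \cdot)$ is strictly increasing on $(0, \infty)$. -/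
open Real

/-- The channel dispersion `V(x) = (1 - 1/(1+x)²)·(log₂ e)²`. -/
noncomputable def channelDispersion (x : ℝ) : ℝ :=
  (1 - 1 / (1 + x) ^ 2) * (Real.logb 2 (Real.exp 1)) ^ 2

/-- The finite-block-length exponent
`f(n,L,x) = (n·log₂(1+x) + 0.5·log₂ n - L)/√(n·V(x))`. -/
noncomputable def fblExponent (n L x : ℝ) : ℝ :=
  (n * Real.logb 2 (1 + x) + 0.5 * Real.logb 2 n - L) / Real.sqrt (n * channelDispersion x)

private lemma alg_key' (q t S n a l : ℝ) (ht : t ≠ 0) (hq : q ≠ 0) (hss : q * q = S)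
    (hSd : S = 1 - 1/t^2) :
    (n * (1 / t) * q - (n * l + a) * (1 / (2 * q) * (-(-((2:ℕ) * t^1 * 1) / (t^2)^2)))) / q ^ 2
      * (t^3 * q * S) = n * (t^2 - 1) - (n * l + a) := by
  have hS' : S * t^2 = t^2 - 1 := by
    rw [hSd]; field_simp
  field_simp
  linear_combination (2*n*S) * hS' + (-2*n*t^2 + 2*n*t^2*S + 2*n + 2*n*l + 2*a) * hss

private lemma aux_deriv' (n a x : ℝ) (hn : 1 ≤ n) (ha : a ≤ 0) (hx : 0 < x) :
    ∃ d, HasDerivAt (fun y => (n * Real.log (1+y) + a) / Real.sqrt (1 - 1/(1+y)^2)) d x ∧ 0 < d := by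
  have ht : (1:ℝ) < 1 + x := by linarith
  have ht0 : (0:ℝ) < 1 + x := by linarith
  have ht2 : (1:ℝ) < (1+x)^2 := by nlinarith
  have hS : 0 < 1 - 1/(1+x)^2 := by
    have : 1/(1+x)^2 < 1 := by
      rw [div_lt_one (by positivity)]; exact ht2
    linarith
  have hsq : 0 < Real.sqrt (1 - 1/(1+x)^2) := Real.sqrt_pos.mpr hS
  have h1 : HasDerivAt (fun y : ℝ => 1 + y) 1 x := (hasDerivAt_id x).const_add 1
  have h2 : HasDerivAt (fun y : ℝ => (1+y)^2) ((2:ℕ) * (1+x)^1 * 1) x := h1.pow 2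
  have h3 : HasDerivAt (fun y : ℝ => ((1+y)^2)⁻¹)
      (-((2:ℕ) * (1+x)^1 * 1) / ((1+x)^2)^2) x := h2.inv (by positivity)
  have hs : HasDerivAt (fun y : ℝ => 1 - 1/(1+y)^2)
      (-(-((2:ℕ) * (1+x)^1 * 1) / ((1+x)^2)^2)) x := by
    simpa [one_div] using h3.const_sub 1
  have hw : HasDerivAt (fun y : ℝ => Real.sqrt (1 - 1/(1+y)^2))
      (1 / (2 * Real.sqrt (1 - 1/(1+x)^2)) * (-(-((2:ℕ) * (1+x)^1 * 1) / ((1+x)^2)^2))) x :=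
    (Real.hasDerivAt_sqrt hS.ne').comp x hs
  have hu : HasDerivAt (fun y : ℝ => n * Real.log (1+y) + a) (n * (1 / (1+x))) x :=
    ((h1.log ht0.ne').const_mul n).add_const a
  have hG := hu.div hw hsq.ne'
  refine ⟨_, hG, ?_⟩
  set t := 1 + x with htdef
  set S := 1 - 1/t^2 with hSdef
  set q := Real.sqrt S with hqdef
  have hss : q * q = S := Real.mul_self_sqrt hS.le
  have hc : 0 < t^3 * q * S := by positivity
  have key := alg_key' q t S n a (Real.log t) ht0.ne' hsq.ne' hss hSdef
  have hpos : 0 < n * (t^2 - 1) - (n * Real.log t + a) := by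
    have hl : Real.log t ≤ t - 1 := Real.log_le_sub_one_of_pos ht0
    have h1' : n * Real.log t ≤ n * (t - 1) := by
      apply mul_le_mul_of_nonneg_left hl; linarith
    have h2' : n * (t - 1) < n * (t^2 - 1) := by
      have hnt : 0 < n * (t^2 - t) := mul_pos (by linarith) (by nlinarith)
      linarith
    linarith
  rw [← key] at hpos
  by_contra h
  push_neg at h
  exact absurd hpos (not_lt.mpr (mul_nonpos_of_nonpos_of_nonneg h hc.le)).elim

private lemma fbl_eq' (n L x : ℝ) (hn : 1 ≤ n) (hx : 0 < x) :
    fblExponent n L x =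
      ((n * Real.log (1+x) + (0.5 * Real.logb 2 n - L) * Real.log 2) /
        Real.sqrt (1 - 1/(1+x)^2)) / Real.sqrt n := by
  have hl2 : 0 < Real.log 2 := Real.log_pos (by norm_num)
  have ht0 : (0:ℝ) < 1 + x := by linarith
  have hS : 0 < 1 - 1/(1+x)^2 := by
    have h2 : (1:ℝ) < (1+x)^2 := by nlinarith
    have : 1/(1+x)^2 < 1 := by rw [div_lt_one (by positivity)]; exact h2
    linarith
  have hn0 : (0:ℝ) < n := by linarith
  have hlogb : Real.logb 2 (Real.exp 1) = 1 / Real.log 2 := by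
    rw [Real.logb, Real.log_exp]
  have hsqrt : Real.sqrt (n * channelDispersion x)
      = Real.sqrt n * Real.sqrt (1 - 1/(1+x)^2) * (1 / Real.log 2) := by
    rw [channelDispersion, hlogb, ← mul_assoc, Real.sqrt_mul (by positivity),
      Real.sqrt_mul hn0.le, Real.sqrt_sq (by positivity)]
  rw [fblExponent, hsqrt, Real.logb, Real.logb]
  have hq : 0 < Real.sqrt (1 - 1/(1+x)^2) := Real.sqrt_pos.mpr hS
  have hsn : 0 < Real.sqrt n := Real.sqrt_pos.mpr hn0
  set q := Real.sqrt (1 - 1/(1+x)^2) with hqdef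
  set sn := Real.sqrt n with hsndef
  field_simp [hl2.ne', hq.ne', hsn.ne']
  ring

/-- For `n ≥ 1` and `0.5·log₂ n ≤ L` (i.e. `n ≤ 2^(2L)`), the finite-block-length exponent
`f(n, L, ·)` is strictly increasing on `(0, ∞)`. -/
theorem fblExponent_strictMonoOn (n L : ℝ) (hn : 1 ≤ n)
    (hb : 0.5 * Real.logb 2 n ≤ L) :
    StrictMonoOn (fblExponent n L) (Set.Ioi 0) := by
  have hl2 : 0 < Real.log 2 := Real.log_pos (by norm_num)
  set a : ℝ := (0.5 * Real.logb 2 n - L) * Real.log 2 with hadef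
  have ha : a ≤ 0 := mul_nonpos_of_nonpos_of_nonneg (by linarith) hl2.le
  set G : ℝ → ℝ := fun y => (n * Real.log (1+y) + a) / Real.sqrt (1 - 1/(1+y)^2) with hGdef
  have hGmono : StrictMonoOn G (Set.Ioi 0) := by
    apply strictMonoOn_of_deriv_pos (convex_Ioi 0)
    · intro y hy
      obtain ⟨d, hd, _⟩ := aux_deriv' n a y hn ha hy
      exact hd.continuousAt.continuousWithinAt
    · intro y hy
      rw [interior_Ioi] at hy
      obtain ⟨d, hd, hdpos⟩ := aux_deriv' n a y hn ha hy
      rw [hd.deriv]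
      exact hdpos
  have hsn : 0 < Real.sqrt n := Real.sqrt_pos.mpr (by linarith)
  have hmono : StrictMonoOn (fun y => G y / Real.sqrt n) (Set.Ioi 0) := by
    intro x hx y hy hxy
    exact (div_lt_div_iff_of_pos_right hsn).mpr (hGmono hx hy hxy)
  exact (hmono.congr (fun x hx => (fbl_eq' n L x hn hx).symm))
end

section
/- Define $f(n, L, x) = \frac{n\log_2(1+x) + 0.5\log_2 n - L}{\sqrt{n V(x)}}$ with $V(x) = \left[1 - \frac{1}{(1+x)^2}\right]\log_2^2 e$, and assume $n \geq 1$ and $0.5\log_2 n \leq L$. Then $f(n, L, \cdot)$ is concave on $(0, \infty)$: its second derivative equals $\sqrt{n}\,\frac{x+1}{(x^2+2x)^{3/2}}\left[\frac{3[\log_2(1+x) + b]}{\log_2(e)(x^2+2x)} - 1 - \frac{1}{(1+x)^2}\right]$ with $b = \frac{0.5\log_2 n - L}{n} \leq 0$, which is negative for all $x > 0$. -/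
open Real

/-- Key inequality: `3 t² log t ≤ t⁴ - 1` for `t ≥ 1`. -/
lemma fbl_key_ineq {t : ℝ} (ht : 1 ≤ t) : 3 * t ^ 2 * Real.log t ≤ t ^ 4 - 1 := by
  have ht0 : 0 < t := lt_of_lt_of_le one_pos ht
  have hu : 0 ≤ Real.log t := Real.log_nonneg ht
  have h1 : 2 * Real.log t ≤ Real.sinh (2 * Real.log t) :=
    Real.self_le_sinh_iff.2 (by positivity)
  have e1 : Real.exp (2 * Real.log t) = t ^ 2 := by
    rw [show (2:ℝ) * Real.log t = ((2:ℕ):ℝ) * Real.log t by norm_num,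
      Real.exp_nat_mul, Real.exp_log ht0]
  have h2 : Real.sinh (2 * Real.log t) = (t ^ 2 - (t ^ 2)⁻¹) / 2 := by
    rw [Real.sinh_eq, Real.exp_neg, e1]
  have h3 : 3 * Real.log t ≤ t ^ 2 - (t ^ 2)⁻¹ := by
    rw [h2] at h1; linarith
  have ht2 : (0:ℝ) < t ^ 2 := by positivity
  have h4 := mul_le_mul_of_nonneg_left h3 ht2.le
  have hdiv : t ^ 2 * (t ^ 2)⁻¹ = 1 := by field_simp
  nlinarith [h4]

/-- Concavity of the reduced function `g(x) = (1+x)(log(1+x)+b)/√(x²+2x)` for `b ≤ 0`. -/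
lemma fbl_aux_concave {b : ℝ} (hb : b ≤ 0) :
    ConcaveOn ℝ (Set.Ioi 0)
      (fun x : ℝ => (1 + x) * (Real.log (1 + x) + b) / Real.sqrt (x ^ 2 + 2 * x)) := by
  set g : ℝ → ℝ := fun x => (1 + x) * (Real.log (1 + x) + b) / Real.sqrt (x ^ 2 + 2 * x) with hg
  set g' : ℝ → ℝ := fun x =>
      (x ^ 2 + 2 * x - Real.log (1 + x) - b) /
        ((x ^ 2 + 2 * x) * Real.sqrt (x ^ 2 + 2 * x)) with hg'
  set g'' : ℝ → ℝ := fun x =>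
      (3 * (1 + x) * (Real.log (1 + x) + b) - (1 + x) * (x ^ 2 + 2 * x)
          - (x ^ 2 + 2 * x) / (1 + x)) /
        ((x ^ 2 + 2 * x) ^ 2 * Real.sqrt (x ^ 2 + 2 * x)) with hg''
  have hint : interior (Set.Ioi (0:ℝ)) = Set.Ioi 0 := interior_Ioi
  have hfacts : ∀ x : ℝ, x ∈ Set.Ioi (0:ℝ) →
      0 < 1 + x ∧ 0 < x ^ 2 + 2 * x := by
    intro x hx
    have hx0 : 0 < x := hx
    exact ⟨by linarith, by nlinarith⟩
  -- first derivative
  have hder1 : ∀ x ∈ Set.Ioi (0:ℝ), HasDerivAt g (g' x) x := by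
    intro x hx
    obtain ⟨ht, hs⟩ := hfacts x hx
    set q := Real.sqrt (x ^ 2 + 2 * x) with hqdef
    have hq : 0 < q := Real.sqrt_pos.2 hs
    have hq2 : q ^ 2 = x ^ 2 + 2 * x := Real.sq_sqrt hs.le
    have hqq : Real.sqrt (x * 2 + x ^ 2) = q := by rw [hqdef]; congr 1; ring
    have e3 : q ^ 3 = q * (x ^ 2 + 2 * x) := by rw [pow_succ, hq2]; ring
    have e4 : q ^ 4 = (x ^ 2 + 2 * x) ^ 2 := by rw [show q^4 = (q^2)^2 by ring, hq2]
    have e5 : q ^ 5 = q * (x ^ 2 + 2 * x) ^ 2 := by rw [show q^5 = q*(q^2)^2 by ring, hq2]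
    have e6 : q ^ 6 = (x ^ 2 + 2 * x) ^ 3 := by rw [show q^6 = (q^2)^3 by ring, hq2]
    have e7 : q ^ 7 = q * (x ^ 2 + 2 * x) ^ 3 := by rw [show q^7 = q*(q^2)^3 by ring, hq2]
    have hlog : HasDerivAt (fun y : ℝ => Real.log (1 + y)) (1 / (1 + x)) x := by
      have := ((hasDerivAt_id x).const_add 1).log (ne_of_gt ht)
      simpa using this
    have hN : HasDerivAt (fun y : ℝ => (1 + y) * (Real.log (1 + y) + b))
        (1 * (Real.log (1 + x) + b) + (1 + x) * (1 / (1 + x))) x :=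
      ((hasDerivAt_id x).const_add 1).mul (hlog.add_const b)
    have hs' : HasDerivAt (fun y : ℝ => y ^ 2 + 2 * y) (2 * x + 2) x := by
      have := (hasDerivAt_pow 2 x).add ((hasDerivAt_id x).const_mul 2)
      simpa [Pi.add_def] using this
    have hsq : HasDerivAt (fun y : ℝ => Real.sqrt (y ^ 2 + 2 * y))
        ((2 * x + 2) / (2 * q)) x := hs'.sqrt (ne_of_gt hs)
    have h : HasDerivAt (fun y : ℝ => (1 + y) * (Real.log (1 + y) + b) / Real.sqrt (y ^ 2 + 2 * y)) _ x :=
      hN.div hsq (ne_of_gt hq)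
    convert h using 1
    rw [hg']
    beta_reduce
    rw [← hqdef]
    rw [← hq2]
    field_simp
    linear_combination (-(Real.log (1 + x) + b)) * hq2
  -- second derivative
  have hder2 : ∀ x ∈ Set.Ioi (0:ℝ), HasDerivAt g' (g'' x) x := by
    intro x hx
    obtain ⟨ht, hs⟩ := hfacts x hx
    set q := Real.sqrt (x ^ 2 + 2 * x) with hqdef
    have hq : 0 < q := Real.sqrt_pos.2 hs
    have hq2 : q ^ 2 = x ^ 2 + 2 * x := Real.sq_sqrt hs.le
    have hqq : Real.sqrt (x * 2 + x ^ 2) = q := by rw [hqdef]; congr 1; ring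
    have e3 : q ^ 3 = q * (x ^ 2 + 2 * x) := by rw [pow_succ, hq2]; ring
    have e4 : q ^ 4 = (x ^ 2 + 2 * x) ^ 2 := by rw [show q^4 = (q^2)^2 by ring, hq2]
    have e5 : q ^ 5 = q * (x ^ 2 + 2 * x) ^ 2 := by rw [show q^5 = q*(q^2)^2 by ring, hq2]
    have e6 : q ^ 6 = (x ^ 2 + 2 * x) ^ 3 := by rw [show q^6 = (q^2)^3 by ring, hq2]
    have e7 : q ^ 7 = q * (x ^ 2 + 2 * x) ^ 3 := by rw [show q^7 = q*(q^2)^3 by ring, hq2]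
    have e8 : q ^ 8 = (x ^ 2 + 2 * x) ^ 4 := by rw [show q^8 = (q^2)^4 by ring, hq2]
    have e9 : q ^ 9 = q * (x ^ 2 + 2 * x) ^ 4 := by rw [show q^9 = q*(q^2)^4 by ring, hq2]
    have hlog : HasDerivAt (fun y : ℝ => Real.log (1 + y)) (1 / (1 + x)) x := by
      have := ((hasDerivAt_id x).const_add 1).log (ne_of_gt ht)
      simpa using this
    have hs' : HasDerivAt (fun y : ℝ => y ^ 2 + 2 * y) (2 * x + 2) x := by
      have := (hasDerivAt_pow 2 x).add ((hasDerivAt_id x).const_mul 2)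
      simpa [Pi.add_def] using this
    have hM : HasDerivAt (fun y : ℝ => y ^ 2 + 2 * y - Real.log (1 + y) - b)
        (2 * x + 2 - 1 / (1 + x)) x := (hs'.sub hlog).sub_const b
    have hsq : HasDerivAt (fun y : ℝ => Real.sqrt (y ^ 2 + 2 * y))
        ((2 * x + 2) / (2 * q)) x := hs'.sqrt (ne_of_gt hs)
    have hD : HasDerivAt (fun y : ℝ => (y ^ 2 + 2 * y) * Real.sqrt (y ^ 2 + 2 * y))
        ((2 * x + 2) * q + (x ^ 2 + 2 * x) * ((2 * x + 2) / (2 * q))) x :=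
      hs'.mul hsq
    have hDne : (x ^ 2 + 2 * x) * q ≠ 0 := by positivity
    have h : HasDerivAt (fun y : ℝ => (y ^ 2 + 2 * y - Real.log (1 + y) - b) /
        ((y ^ 2 + 2 * y) * Real.sqrt (y ^ 2 + 2 * y))) _ x := hM.div hD hDne
    convert h using 1
    rw [hg'']
    beta_reduce
    rw [← hqdef]
    rw [← hq2]
    field_simp
    ring_nf
  -- nonpositivity of the second derivative
  have hneg : ∀ x ∈ Set.Ioi (0:ℝ), g'' x ≤ 0 := by
    intro x hx
    obtain ⟨ht, hs⟩ := hfacts x hx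
    have ht1 : (1:ℝ) ≤ 1 + x := by linarith [Set.mem_Ioi.1 hx]
    have hkey := fbl_key_ineq ht1
    have hlog : 0 ≤ Real.log (1 + x) := Real.log_nonneg ht1
    have hnum : 3 * (1 + x) * (Real.log (1 + x) + b) - (1 + x) * (x ^ 2 + 2 * x)
        - (x ^ 2 + 2 * x) / (1 + x) ≤ 0 := by
      have h1 : (x ^ 2 + 2 * x) / (1 + x) * (1 + x) = x ^ 2 + 2 * x := by
        field_simp
      nlinarith [hkey, mul_nonneg ht.le (neg_nonneg.2 hb), h1,
        mul_pos ht (mul_pos ht ht)]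
    exact div_nonpos_of_nonpos_of_nonneg hnum (by positivity)
  refine concaveOn_of_hasDerivWithinAt2_nonpos (f' := g') (f'' := g'') (convex_Ioi 0) ?_ ?_ ?_ ?_
  · intro x hx
    exact (hder1 x hx).continuousAt.continuousWithinAt
  · intro x hx
    rw [hint] at hx
    exact ((hder1 x hx).hasDerivWithinAt)
  · intro x hx
    rw [hint] at hx
    exact ((hder2 x hx).hasDerivWithinAt)
  · intro x hx
    rw [hint] at hx
    exact hneg x hx

/-- For `n ≥ 1` and `0.5·log₂ n ≤ L`, the finite-block-length exponent `f(n, L, ·)` is concave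
on `(0, ∞)`. -/
theorem fblExponent_concaveOn (n L : ℝ) (hn : 1 ≤ n)
    (hb : 0.5 * Real.logb 2 n ≤ L) :
    ConcaveOn ℝ (Set.Ioi 0) (fblExponent n L) := by
  have hn0 : 0 < n := lt_of_lt_of_le one_pos hn
  have hlog2 : (0:ℝ) < Real.log 2 := Real.log_pos (by norm_num)
  set b : ℝ := (0.5 * Real.logb 2 n - L) * Real.log 2 / n with hbdef
  have hb0 : b ≤ 0 := by
    apply div_nonpos_of_nonpos_of_nonneg _ hn0.le
    exact mul_nonpos_of_nonpos_of_nonneg (by linarith) hlog2.le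
  have hconc := (fbl_aux_concave hb0).smul (Real.sqrt_nonneg n)
  refine hconc.congr ?_
  intro x hx
  have hx0 : 0 < x := hx
  have ht : 0 < 1 + x := by linarith
  have hs : 0 < x ^ 2 + 2 * x := by nlinarith
  set q := Real.sqrt (x ^ 2 + 2 * x) with hqdef
  set p := Real.sqrt n with hpdef
  have hq : 0 < q := Real.sqrt_pos.2 hs
  have hp : 0 < p := Real.sqrt_pos.2 hn0
  have hq2 : q ^ 2 = x ^ 2 + 2 * x := Real.sq_sqrt hs.le
  have hqq : Real.sqrt (x * 2 + x ^ 2) = q := by rw [hqdef]; congr 1; ring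
  have hp2 : p ^ 2 = n := Real.sq_sqrt hn0.le
  have eq3 : q ^ 3 = q * (x ^ 2 + 2 * x) := by rw [pow_succ, hq2]; ring
  have ep3 : p ^ 3 = p * n := by rw [pow_succ, hp2]; ring
  have hV : n * channelDispersion x = (p * q / ((1 + x) * Real.log 2)) ^ 2 := by
    rw [channelDispersion, Real.logb, Real.log_exp]
    field_simp
    ring_nf
    simp only [eq3, ep3, hq2, hp2]
    ring
  have hVpos : 0 ≤ p * q / ((1 + x) * Real.log 2) := by positivity
  have hsqrtV : Real.sqrt (n * channelDispersion x) = p * q / ((1 + x) * Real.log 2) := by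
    rw [hV, Real.sqrt_sq hVpos]
  simp only [Pi.smul_apply, smul_eq_mul, fblExponent, hsqrtV, hbdef, Real.logb]
  field_simp
  ring_nf
  simp only [hqq, eq3, ep3, hq2, hp2]
  ring
end

section
/- For all $x > 0$: $3\ln(1+x) < (x^2 + 2x)\left(1 + \frac{1}{(1+x)^2}\right)$. -/
open Real

lemma aux_log_lt (t : ℝ) (ht : 1 < t) :
    3 * Real.log t < t ^ 2 - 1 / t ^ 2 := by
  set g : ℝ → ℝ := fun s => s ^ 2 - 1 / s ^ 2 - 3 * Real.log s with hg
  have key : StrictMonoOn g (Set.Ici 1) := by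
    apply strictMonoOn_of_deriv_pos (convex_Ici 1)
    · apply ContinuousOn.sub
      · apply ContinuousOn.sub (continuousOn_pow 2)
        exact ContinuousOn.div continuousOn_const (continuousOn_pow 2)
          (fun s hs => by
            have : (1:ℝ) ≤ s := hs
            positivity)
      · exact ContinuousOn.mul continuousOn_const
          (Real.continuousOn_log.mono (fun s hs => by
            simp only [Set.mem_compl_iff, Set.mem_singleton_iff]
            have : (1:ℝ) ≤ s := hs
            intro h; linarith))
    · intro s hs
      rw [interior_Ici] at hs
      have hs1 : (1:ℝ) < s := hs
      have hs0 : (0:ℝ) < s := by linarith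
      have hd : HasDerivAt g (2 * s - (-(2 * s) / (s ^ 2) ^ 2) - 3 * (1 / s)) s := by
        have h1 : HasDerivAt (fun s : ℝ => s ^ 2) (2 * s) s := by
          simpa using hasDerivAt_pow 2 s
        have h2 : HasDerivAt (fun s : ℝ => 1 / s ^ 2) (-(2 * s) / (s ^ 2) ^ 2) s := by
          have := (hasDerivAt_const s (1:ℝ)).div h1 (by positivity)
          simpa [Pi.div_def] using this
        have h3 : HasDerivAt (fun s : ℝ => 3 * Real.log s) (3 * (1 / s)) s := by
          simpa using (Real.hasDerivAt_log (ne_of_gt hs0)).const_mul 3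
        exact (h1.sub h2).sub h3
      rw [hd.deriv]
      have heq : 2 * s - -(2 * s) / (s ^ 2) ^ 2 - 3 * (1 / s) =
          (2 * s ^ 4 - 3 * s ^ 2 + 2) / s ^ 3 := by
        field_simp; ring
      rw [heq]
      apply div_pos _ (by positivity)
      nlinarith [sq_nonneg (s^2 - 1), sq_nonneg (s^2 - 2)]
  have h := key (Set.self_mem_Ici) (Set.mem_Ici.mpr (le_of_lt ht)) ht
  simp only [hg, one_pow, Real.log_one] at h
  norm_num at h
  rw [one_div]
  linarith

/-- For all `x > 0`: `3·ln(1+x) < (x² + 2x)(1 + 1/(1+x)²)`. -/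
theorem three_log_lt (x : ℝ) (hx : 0 < x) :
    3 * Real.log (1 + x) < (x ^ 2 + 2 * x) * (1 + 1 / (1 + x) ^ 2) := by
  have ht : 1 < 1 + x := by linarith
  have h := aux_log_lt (1 + x) ht
  have hne : ((1 + x) ^ 2 : ℝ) ≠ 0 := by positivity
  have : (x ^ 2 + 2 * x) * (1 + 1 / (1 + x) ^ 2) = (1 + x) ^ 2 - 1 / (1 + x) ^ 2 := by
    field_simp
    ring
  rw [this]
  exact h
end

section
/- Let $K$ be zero-truncated Poisson with parameter $\alpha = \lambda/B > 0$, i.e., $\mathbb{P}[K=k] = \frac{\alpha^k e^{-\alpha}}{k!(1-e^{-\alpha})}$, and let $\mathrm{SINR}_1(k) = \frac{\rho}{1 + \rho(k-1)}$ with $0 < \rho < 1$. Then $\mathbb{E}[\mathrm{SINR}_1(K)] = \frac{\rho}{1-\rho}\left[1 + \frac{(-\alpha)^{1 - 1/\rho}}{e^{\alpha}-1}\left(\Gamma_o(\rho^{-1}) - \Gamma_o(\rho^{-1}, -\alpha)\right)\right]$, where $\Gamma_o(s) = \int_0^{\infty} t^{s-1}e^{-t}\,dt$ is the Gamma function and $\Gamma_o(s,x)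 = \int_x^{\infty} t^{s-1}e^{-t}\,dt$ the upper incomplete Gamma function (analytically continued to negative arguments). -/
open Real Complex

private lemma prodPos {s : ℝ} (hs : 0 < s) (n : ℕ) :
    0 < ∏ j ∈ Finset.range (n + 1), (s + (j : ℝ)) :=
  Finset.prod_pos fun j _ => by positivity

private lemma prodGe {s : ℝ} (hs : 0 < s) (n : ℕ) :
    s * (n.factorial : ℝ) ≤ ∏ j ∈ Finset.range (n + 1), (s + (j : ℝ)) := by
  induction n with
  | zero => simp
  | succ n ih =>
      rw [Finset.prod_range_succ]
      have h1 : ((n+1).factorial : ℝ) = (n.factorial : ℝ) * ((n : ℝ) + 1) := by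
        push_cast [Nat.factorial_succ]; ring
      have h2 : s * ((n+1).factorial : ℝ) = (s * n.factorial) * ((n : ℝ) + 1) := by
        rw [h1]; ring
      rw [h2]
      have : ((n:ℝ) + 1) ≤ s + ((n+1 : ℕ) : ℝ) := by push_cast; linarith
      apply mul_le_mul ih this (by positivity) (le_of_lt (prodPos hs n))

private lemma summable_norm_g {s : ℝ} (hs : 0 < s) (α : ℝ) :
    Summable (fun n : ℕ => ‖(-α) ^ n / ∏ j ∈ Finset.range (n + 1), (s + (j : ℝ))‖) := by
  apply Summable.of_nonneg_of_le (fun n => norm_nonneg _) (fun n => ?_)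
    ((Real.summable_pow_div_factorial |α|).mul_left (1/s))
  have hp := prodPos hs n
  have hfac : (0:ℝ) < n.factorial := by positivity
  rw [norm_div, norm_pow, norm_neg, Real.norm_eq_abs, Real.norm_eq_abs,
    abs_of_pos hp]
  calc |α| ^ n / ∏ j ∈ Finset.range (n + 1), (s + (j : ℝ))
      ≤ |α| ^ n / (s * n.factorial) := by
        apply div_le_div_of_nonneg_left (by positivity) (by positivity) (prodGe hs n)
    _ = 1 / s * (|α| ^ n / n.factorial) := by field_simp

private lemma prodShift (s : ℝ) (n : ℕ) :
    ∏ j ∈ Finset.range (n + 2), (s + (j : ℝ))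
      = s * ∏ j ∈ Finset.range (n + 1), ((s + 1) + (j : ℝ)) := by
  rw [Finset.prod_range_succ', mul_comm]
  congr 1
  · norm_num
  · exact Finset.prod_congr rfl fun j _ => by push_cast; ring

private lemma keyfin : ∀ (k : ℕ) (s : ℝ), 0 < s →
    ∑ n ∈ Finset.range (k + 1),
        (-1 : ℝ) ^ n / ((k - n).factorial * ∏ j ∈ Finset.range (n + 1), (s + (j : ℝ)))
      = 1 / (k.factorial * (s + k)) := by
  intro k
  induction k with
  | zero => intro s hs; simp
  | succ k ih =>
      intro s hs
      have hs1 : (0:ℝ) < s + 1 := by linarith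
      rw [Finset.sum_range_succ']
      have h0 : ((-1:ℝ))^0 / (((k+1-0).factorial : ℝ) * ∏ j ∈ Finset.range (0+1), (s + (j:ℝ)))
          = 1 / (((k+1).factorial : ℝ) * s) := by norm_num
      have hterm : ∀ n, ((-1:ℝ))^(n+1) / (((k+1-(n+1)).factorial : ℝ) * ∏ j ∈ Finset.range (n+1+1), (s + (j:ℝ)))
          = -(1/s) * ((-1:ℝ)^n / (((k-n).factorial : ℝ) * ∏ j ∈ Finset.range (n+1), ((s+1) + (j:ℝ)))) := by
        intro n
        have hsub : k + 1 - (n + 1) = k - n := by omega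
        rw [hsub, prodShift s n, pow_succ]
        have hp := Finset.prod_pos (fun j (_ : j ∈ Finset.range (n+1)) => by positivity :
          ∀ j ∈ Finset.range (n+1), (0:ℝ) < (s+1) + (j:ℝ))
        have hf : (0:ℝ) < ((k-n).factorial : ℝ) := by positivity
        field_simp
      rw [Finset.sum_congr rfl fun n _ => hterm n, h0, ← Finset.mul_sum, ih (s+1) hs1]
      have hf1 : (0:ℝ) < ((k+1).factorial : ℝ) := by positivity
      have hf2 : (0:ℝ) < (k.factorial : ℝ) := by positivity
      have hsk : (0:ℝ) < s + 1 + k := by positivity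
      have hsk1 : (0:ℝ) < s + ((k:ℝ)+1) := by positivity
      have hfaceq : ((k+1).factorial : ℝ) = (k.factorial : ℝ) * ((k:ℝ)+1) := by
        push_cast [Nat.factorial_succ]; ring
      push_cast
      rw [hfaceq]
      field_simp
      ring

private lemma summable_norm_f (α : ℝ) :
    Summable (fun n : ℕ => ‖α ^ n / (n.factorial : ℝ)‖) := by
  have := Real.summable_pow_div_factorial |α|
  apply this.congr
  intro n
  rw [norm_div, norm_pow, Real.norm_eq_abs, Real.norm_eq_abs, Nat.abs_cast]

private lemma series_id {s : ℝ} (hs : 0 < s) (α : ℝ) :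
    Real.exp α * ∑' n : ℕ, (-α) ^ n / ∏ j ∈ Finset.range (n + 1), (s + (j : ℝ))
      = ∑' k : ℕ, α ^ k / (k.factorial * (s + (k : ℝ))) := by
  have hexp : Real.exp α = ∑' n : ℕ, α ^ n / (n.factorial : ℝ) := by
    rw [Real.exp_eq_exp_ℝ, NormedSpace.exp_eq_tsum_div]
  rw [hexp, tsum_mul_tsum_eq_tsum_sum_range_of_summable_norm (summable_norm_f α)
    (summable_norm_g hs α)]
  refine tsum_congr fun k => ?_
  have hstep : ∀ n ∈ Finset.range (k + 1),
      α ^ n / (n.factorial : ℝ) * ((-α) ^ (k - n) / ∏ j ∈ Finset.range (k - n + 1), (s + (j:ℝ)))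
        = α ^ k * ((fun m : ℕ => (-1:ℝ)^m / (((k-m).factorial : ℝ) * ∏ j ∈ Finset.range (m+1), (s + (j:ℝ)))) (k - n)) := by
    intro n hn
    have hnk : n ≤ k := by simpa using Nat.lt_succ_iff.mp (Finset.mem_range.mp hn)
    simp only []
    rw [Nat.sub_sub_self hnk, neg_pow]
    have : α ^ n * α ^ (k - n) = α ^ k := by rw [← pow_add, Nat.add_sub_cancel' hnk]
    field_simp
    rw [← this]
  rw [Finset.sum_congr rfl hstep, ← Finset.mul_sum]
  have hreflect := Finset.sum_range_reflect
    (fun m : ℕ => (-1:ℝ)^m / (((k-m).factorial : ℝ) * ∏ j ∈ Finset.range (m+1), (s + (j:ℝ)))) (k+1)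
  simp only [Nat.add_sub_cancel] at hreflect
  rw [hreflect, keyfin k s hs]
  field_simp

private lemma real_main (ρ α : ℝ) (hρ0 : 0 < ρ) (hρ1 : ρ < 1) (hα : 0 < α) :
    ∑' k : ℕ+, α ^ (k : ℕ) * Real.exp (-α) / ((k : ℕ).factorial * (1 - Real.exp (-α)))
        * (ρ / (1 + ρ * (((k : ℕ) : ℝ) - 1)))
      = ρ / (1 - ρ) * (1 + (-α) * Real.exp α
          * (∑' n : ℕ, (-α) ^ n / ∏ j ∈ Finset.range (n + 1), (1 / ρ + (j : ℝ)))
          / (Real.exp α - 1)) := by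
  set q : ℝ := (1 - ρ) / ρ with hq_def
  have hq : 0 < q := div_pos (by linarith) hρ0
  have hqρ : 1 / ρ = q + 1 := by rw [hq_def]; field_simp; ring
  have hE : 1 < Real.exp α := by
    rw [← Real.exp_zero]; exact Real.exp_lt_exp.mpr hα
  have hE0 : (0:ℝ) < Real.exp α := Real.exp_pos α
  have hE1 : Real.exp α - 1 ≠ 0 := by linarith
  set L : ℕ → ℝ := fun k => α ^ k / (k.factorial * (q + (k : ℝ))) with hL_def
  have hLsummable : Summable L := by
    apply Summable.of_nonneg_of_le (fun k => by positivity) (fun k => ?_)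
      ((Real.summable_pow_div_factorial α).mul_left (1/q))
    have h1 : (0:ℝ) < k.factorial := by positivity
    calc α ^ k / (k.factorial * (q + (k:ℝ)))
        ≤ α ^ k / (k.factorial * q) := by
          apply div_le_div_of_nonneg_left (by positivity) (by positivity)
          have : (0:ℝ) ≤ (k:ℝ) := Nat.cast_nonneg k
          nlinarith
      _ = 1 / q * (α ^ k / k.factorial) := by field_simp
  rw [← Equiv.pnatEquivNat.symm.tsum_eq]
  have hterm : ∀ n : ℕ,
      α ^ ((Equiv.pnatEquivNat.symm n : ℕ+) : ℕ) * Real.exp (-α)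
          / (((Equiv.pnatEquivNat.symm n : ℕ+) : ℕ).factorial * (1 - Real.exp (-α)))
          * (ρ / (1 + ρ * ((((Equiv.pnatEquivNat.symm n : ℕ+) : ℕ) : ℝ) - 1)))
        = 1 / (Real.exp α - 1) * L (n + 1) := by
    intro n
    have hcoe : ((Equiv.pnatEquivNat.symm n : ℕ+) : ℕ) = n + 1 := by simp
    rw [hcoe]
    have hρn : (0:ℝ) < 1 + ρ * n := by positivity
    have hqn : (0:ℝ) < q + ((n:ℝ) + 1) := by positivity
    have hfac : (0:ℝ) < (n+1).factorial := by positivity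
    have hqval : q + ((n:ℝ) + 1) = (1 + ρ * n) / ρ := by
      rw [hq_def]; field_simp; ring
    rw [Real.exp_neg, hL_def]
    simp only []
    push_cast
    rw [hqval]
    have h1 : Real.exp α ≠ 0 := ne_of_gt hE0
    have h2 : 1 - (Real.exp α)⁻¹ ≠ 0 := by
      have : (Real.exp α)⁻¹ < 1 := by
        rw [inv_lt_one_iff₀]; right; exact hE
      linarith
    have h3 : (1 + ρ * (n:ℝ)) ≠ 0 := ne_of_gt hρn
    have h4 : ((n+1).factorial : ℝ) ≠ 0 := ne_of_gt hfac
    field_simp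
    ring
    field_simp
    ring
  rw [tsum_congr hterm, tsum_mul_left]
  have hzero : ∑' k, L k = L 0 + ∑' n, L (n + 1) := hLsummable.tsum_eq_zero_add
  have hL0 : L 0 = 1 / q := by simp [hL_def]
  have hseries : ∑' k, L k
      = Real.exp α * ∑' n : ℕ, (-α) ^ n / ∏ j ∈ Finset.range (n + 1), (q + (j : ℝ)) := by
    rw [series_id hq α]
  have hgsummable : Summable (fun n : ℕ => (-α) ^ n / ∏ j ∈ Finset.range (n + 1), (q + (j : ℝ))) :=
    (summable_norm_g hq α).of_norm
  have hgzero : ∑' n : ℕ, (-α) ^ n / ∏ j ∈ Finset.range (n + 1), (q + (j : ℝ))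
      = 1 / q + ∑' n : ℕ, (-α) ^ (n+1) / ∏ j ∈ Finset.range (n + 2), (q + (j : ℝ)) := by
    rw [hgsummable.tsum_eq_zero_add]
    norm_num
  have hgshift : ∀ n : ℕ, (-α) ^ (n+1) / ∏ j ∈ Finset.range (n + 2), (q + (j : ℝ))
      = (-α / q) * ((-α) ^ n / ∏ j ∈ Finset.range (n + 1), ((q + 1) + (j : ℝ))) := by
    intro n
    rw [prodShift q n, pow_succ]
    have hp := prodPos (by linarith : (0:ℝ) < q + 1) n
    field_simp
  simp only [hqρ]
  set S := ∑' n : ℕ, (-α) ^ n / ∏ j ∈ Finset.range (n + 1), (q + 1 + (j : ℝ)) with hS_def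
  have hsum_shift : ∑' n : ℕ, (-α) ^ (n+1) / ∏ j ∈ Finset.range (n + 2), (q + (j : ℝ))
      = (-α / q) * S := by
    rw [tsum_congr hgshift, tsum_mul_left]
  have h2 : ∑' k, L k = Real.exp α * (1 / q + (-α / q) * S) := by
    rw [hseries, hgzero, hsum_shift]
  have htail : ∑' n : ℕ, L (n + 1) = Real.exp α * (1 / q + (-α / q) * S) - 1 / q := by
    rw [hL0] at hzero
    linarith [hzero, h2]
  rw [htail]
  have hρq : ρ / (1 - ρ) = 1 / q := by
    rw [hq_def, one_div_div]
  rw [hρq]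
  have hqne : q ≠ 0 := ne_of_gt hq
  field_simp
  ring

/-- The lower incomplete Gamma function `γ(s, x)`, analytically continued to all complex `x`
via its everywhere-convergent series `γ(s,x) = x^s e^(-x) ∑_{n≥0} x^n / (s(s+1)⋯(s+n))`. -/
noncomputable def lowerIncGamma (s x : ℂ) : ℂ :=
  x ^ s * Complex.exp (-x) * ∑' n : ℕ, x ^ n / ∏ j ∈ Finset.range (n + 1), (s + j)

/-- The upper incomplete Gamma function `Γ(s, x) = Γ(s) - γ(s, x)`, analytically continued
to negative (complex) second arguments. -/
noncomputable def upperIncGamma (s x : ℂ) : ℂ :=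
  Complex.Gamma s - lowerIncGamma s x

/-- Mean first-attempt SINR over a zero-truncated Poisson number of contenders. With
`P[K = k] = α^k e^(-α)/(k!(1 - e^(-α)))` for `k ≥ 1` and `SINR₁(k) = ρ/(1 + ρ(k-1))`,
`0 < ρ < 1`, one has
`E[SINR₁(K)] = ρ/(1-ρ) · [1 + (-α)^(1-1/ρ)/(e^α - 1) · (Γ(1/ρ) - Γ(1/ρ, -α))]`,
where the incomplete Gamma function is analytically continued to negative arguments. -/
theorem mean_sinr_truncatedPoisson (ρ α : ℝ) (hρ0 : 0 < ρ) (hρ1 : ρ < 1) (hα : 0 < α) :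
    ((∑' k : ℕ+, α ^ (k : ℕ) * Real.exp (-α) / ((k : ℕ).factorial * (1 - Real.exp (-α)))
        * (ρ / (1 + ρ * (((k : ℕ) : ℝ) - 1))) : ℝ) : ℂ)
      = (ρ / (1 - ρ) : ℝ)
        * (1 + (-(α : ℂ)) ^ ((1 : ℂ) - 1 / (ρ : ℂ)) / (Complex.exp (α : ℂ) - 1)
            * (Complex.Gamma (1 / (ρ : ℂ)) - upperIncGamma (1 / (ρ : ℂ)) (-(α : ℂ)))) := by
  have hx : (-(α : ℂ)) ≠ 0 := by
    simp only [ne_eq, neg_eq_zero, Complex.ofReal_eq_zero]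
    exact ne_of_gt hα
  have hlow : Complex.Gamma (1 / (ρ : ℂ)) - upperIncGamma (1 / (ρ : ℂ)) (-(α : ℂ))
      = lowerIncGamma (1 / (ρ : ℂ)) (-(α : ℂ)) := by
    rw [upperIncGamma]; ring
  rw [hlow, lowerIncGamma, neg_neg]
  have hSc : (∑' n : ℕ, (-(α:ℂ)) ^ n / ∏ j ∈ Finset.range (n + 1), (1 / (ρ:ℂ) + (j:ℕ)))
      = ((∑' n : ℕ, (-α) ^ n / ∏ j ∈ Finset.range (n + 1), (1 / ρ + (j : ℝ)) : ℝ) : ℂ) := by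
    rw [Complex.ofReal_tsum]
    refine tsum_congr fun n => ?_
    push_cast
    ring
  rw [hSc]
  have hpow : (-(α:ℂ)) ^ ((1:ℂ) - 1 / (ρ:ℂ)) * (-(α:ℂ)) ^ ((1:ℂ) / (ρ:ℂ)) = -(α:ℂ) := by
    rw [← Complex.cpow_add _ _ hx]
    norm_num
  have hkey : ∀ (Sc : ℂ), (-(α:ℂ)) ^ ((1:ℂ) - 1 / (ρ:ℂ)) / (Complex.exp (α:ℂ) - 1)
        * ((-(α:ℂ)) ^ ((1:ℂ) / (ρ:ℂ)) * Complex.exp (α:ℂ) * Sc)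
      = (-(α:ℂ)) * Complex.exp (α:ℂ) * Sc / (Complex.exp (α:ℂ) - 1) := by
    intro Sc
    rw [div_mul_eq_mul_div,
      show (-(α:ℂ)) ^ ((1:ℂ) - 1 / (ρ:ℂ)) * ((-(α:ℂ)) ^ ((1:ℂ) / (ρ:ℂ)) * Complex.exp (α:ℂ) * Sc)
        = ((-(α:ℂ)) ^ ((1:ℂ) - 1 / (ρ:ℂ)) * (-(α:ℂ)) ^ ((1:ℂ) / (ρ:ℂ))) * Complex.exp (α:ℂ) * Sc
        from by ring, hpow]
  rw [show (1 / (ρ:ℂ)) = ((1:ℂ) / (ρ:ℂ)) from rfl, hkey, ← Complex.ofReal_exp,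
    real_main ρ α hρ0 hρ1 hα]
  push_cast
  ring
end
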